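/- arXiv:1605.05753 — 2 statements merged into one kernel-verified Lean document; each statement's English description precedes it below -/
import Mathlib

section
/- If W_1,...,W_N are independent nonnegative random variables with CDFs bounded below by F_1,...,F_N respectively (i.e. P(W_n ≤ x) ≥ F_n(x) for all x, with each F_n a CDF), then P(∑_{n=1}^N W_n > τ) ≤ 1 − (F_1 ∗ ⋯ ∗ F_N)(τ), where ∗ is the convolution of distribution functions. -/
open MeasureTheory ProbabilityTheory Finset

lemma pi_cdf_dom : ∀ (N : ℕ) (ν κ : Fin N → Measure ℝ),
    (∀ n, IsProbabilityMeasure (ν n)) → (∀ n, IsProbabilityMeasure (κ n)) →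
    (∀ n x, ν n (Set.Iic x) ≤ κ n (Set.Iic x)) → ∀ τ : ℝ,
    Measure.pi ν {x | ∑ n, x n ≤ τ} ≤ Measure.pi κ {x | ∑ n, x n ≤ τ} := by
  intro N
  induction N with
  | zero =>
    intro ν κ hν hκ _ τ
    haveI : ∀ n, IsProbabilityMeasure (ν n) := hν
    haveI : ∀ n, IsProbabilityMeasure (κ n) := hκ
    by_cases h : (0 : ℝ) ≤ τ
    · have hs : {x : Fin 0 → ℝ | ∑ n, x n ≤ τ} = Set.univ := by
        ext x; simp [h]
      rw [hs, measure_univ, measure_univ]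
    · have hs : {x : Fin 0 → ℝ | ∑ n, x n ≤ τ} = ∅ := by
        ext x; simp [h]
      rw [hs]
      simp
  | succ N ih =>
    intro ν κ hν hκ hdom τ
    haveI : ∀ n, IsProbabilityMeasure (ν n) := hν
    haveI : ∀ n, IsProbabilityMeasure (κ n) := hκ
    set e := MeasurableEquiv.piFinSuccAbove (fun _ : Fin (N + 1) => ℝ) 0 with he
    set B : Set (ℝ × (Fin N → ℝ)) := {p | p.1 + ∑ i, p.2 i ≤ τ} with hBdef
    have hB : MeasurableSet B := by
      apply measurableSet_le _ measurable_const
      exact measurable_fst.add (by fun_prop)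
    have hpre : ∀ ρ : Fin (N + 1) → Measure ℝ,
        {x : Fin (N + 1) → ℝ | ∑ n, x n ≤ τ} = e ⁻¹' B := by
      intro ρ
      ext x
      simp only [Set.mem_setOf_eq, Set.mem_preimage, he,
        MeasurableEquiv.piFinSuccAbove_apply, hBdef, Fin.insertNthEquiv,
        Equiv.coe_fn_symm_mk, Fin.removeNth]
      rw [Fin.sum_univ_succ]
      simp [Fin.succAbove_zero, Fin.tail]
    have hmapν := (measurePreserving_piFinSuccAbove ν 0).map_eq
    have hmapκ := (measurePreserving_piFinSuccAbove κ 0).map_eq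
    have happν : Measure.pi ν {x | ∑ n, x n ≤ τ}
        = ((ν 0).prod (Measure.pi fun j => ν ((0 : Fin (N+1)).succAbove j))) B := by
      rw [hpre ν, ← Measure.map_apply e.measurable hB, hmapν]
    have happκ : Measure.pi κ {x | ∑ n, x n ≤ τ}
        = ((κ 0).prod (Measure.pi fun j => κ ((0 : Fin (N+1)).succAbove j))) B := by
      rw [hpre κ, ← Measure.map_apply e.measurable hB, hmapκ]
    rw [happν, happκ]
    have hsect : ∀ y : Fin N → ℝ, ((fun a => (a, y)) ⁻¹' B) = Set.Iic (τ - ∑ i, y i) := by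
      intro y
      ext a
      simp only [Set.mem_preimage, hBdef, Set.mem_setOf_eq, Set.mem_Iic]
      constructor <;> intro h <;> linarith
    calc ((ν 0).prod (Measure.pi fun j => ν ((0 : Fin (N+1)).succAbove j))) B
        = ∫⁻ y, ν 0 ((fun a => (a, y)) ⁻¹' B)
            ∂(Measure.pi fun j => ν ((0 : Fin (N+1)).succAbove j)) :=
          Measure.prod_apply_symm hB
      _ ≤ ∫⁻ y, κ 0 ((fun a => (a, y)) ⁻¹' B)
            ∂(Measure.pi fun j => ν ((0 : Fin (N+1)).succAbove j)) := by
          apply lintegral_mono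
          intro y
          dsimp only
          rw [hsect y]
          exact hdom 0 _
      _ = ((κ 0).prod (Measure.pi fun j => ν ((0 : Fin (N+1)).succAbove j))) B :=
          (Measure.prod_apply_symm hB).symm
      _ = ∫⁻ a, (Measure.pi fun j => ν ((0 : Fin (N+1)).succAbove j)) (Prod.mk a ⁻¹' B)
            ∂(κ 0) := Measure.prod_apply hB
      _ ≤ ∫⁻ a, (Measure.pi fun j => κ ((0 : Fin (N+1)).succAbove j)) (Prod.mk a ⁻¹' B)
            ∂(κ 0) := by
          apply lintegral_mono
          intro a
          dsimp only
          have hsect2 : (Prod.mk a ⁻¹' B) = {y : Fin N → ℝ | ∑ i, y i ≤ τ - a} := by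
            ext y
            simp only [Set.mem_preimage, hBdef, Set.mem_setOf_eq]
            constructor <;> intro h <;> linarith
          rw [hsect2]
          exact ih _ _ (fun j => hν _) (fun j => hκ _) (fun j x => hdom _ x) (τ - a)
      _ = ((κ 0).prod (Measure.pi fun j => κ ((0 : Fin (N+1)).succAbove j))) B :=
          (Measure.prod_apply hB).symm

/-- Tail bound for a sum of independent nonnegative random variables whose CDFs are
bounded below by the CDFs F_n of probability measures ν_n:
P(∑ W_n > τ) ≤ 1 − (F_1 ∗ ⋯ ∗ F_N)(τ), the convolution being evaluated as the
product measure of the set {x | ∑ x_n ≤ τ}. -/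
theorem tail_bound_sum_independent_convolution
    {Ω : Type*} {m : MeasurableSpace Ω} (μ : Measure Ω) [IsProbabilityMeasure μ]
    (N : ℕ) (W : Fin N → Ω → ℝ) (hW : ∀ n, Measurable (W n))
    (hWpos : ∀ n ω, 0 ≤ W n ω)
    (hindep : iIndepFun W μ)
    (ν : Fin N → Measure ℝ) (hν : ∀ n, IsProbabilityMeasure (ν n))
    (hcdf : ∀ n x, ((ν n) (Set.Iic x)).toReal ≤ (μ {ω | W n ω ≤ x}).toReal)
    (τ : ℝ) :
    (μ {ω | τ < ∑ n, W n ω}).toReal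
      ≤ 1 - ((Measure.pi ν) {x | ∑ n, x n ≤ τ}).toReal := by
  haveI : ∀ n, IsProbabilityMeasure (ν n) := hν
  set κ : Fin N → Measure ℝ := fun n => μ.map (W n) with hκdef
  haveI hκprob : ∀ n, IsProbabilityMeasure (κ n) :=
    fun n => Measure.isProbabilityMeasure_map (hW n).aemeasurable
  have hκIic : ∀ n x, κ n (Set.Iic x) = μ {ω | W n ω ≤ x} := by
    intro n x
    rw [hκdef, Measure.map_apply (hW n) measurableSet_Iic]
    rfl
  have hdom : ∀ n x, ν n (Set.Iic x) ≤ κ n (Set.Iic x) := by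
    intro n x
    rw [hκIic n x]
    exact (ENNReal.toReal_le_toReal (measure_ne_top _ _) (measure_ne_top _ _)).mp (hcdf n x)
  -- the law of (W 1, ..., W N) is the product of laws
  have hmap : μ.map (fun ω n => W n ω) = Measure.pi κ := by
    symm
    apply Measure.pi_eq
    intro s hs
    rw [Measure.map_apply (measurable_pi_lambda _ hW) (MeasurableSet.univ_pi hs)]
    have hpre : (fun ω n => W n ω) ⁻¹' Set.pi Set.univ s = ⋂ n, W n ⁻¹' s n := by
      ext ω; simp [Set.mem_pi]
    rw [hpre]
    calc μ (⋂ n, W n ⁻¹' s n) = ∏ i, μ (W i ⁻¹' s i) := by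
          simpa using hindep.measure_inter_preimage_eq_mul Finset.univ (fun i _ => hs i)
      _ = ∏ i, κ i (s i) := Finset.prod_congr rfl fun i _ => by
          rw [hκdef, Measure.map_apply (hW i) (hs i)]
  have hsumMeas : MeasurableSet {x : Fin N → ℝ | ∑ n, x n ≤ τ} := by
    apply measurableSet_le _ measurable_const
    fun_prop
  have hκset : Measure.pi κ {x | ∑ n, x n ≤ τ} = μ {ω | ∑ n, W n ω ≤ τ} := by
    rw [← hmap, Measure.map_apply (measurable_pi_lambda _ hW) hsumMeas]
    rfl
  have key : Measure.pi ν {x | ∑ n, x n ≤ τ} ≤ μ {ω | ∑ n, W n ω ≤ τ} := by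
    rw [← hκset]
    exact pi_cdf_dom N ν κ hν hκprob hdom τ
  have hcompl : {ω | τ < ∑ n, W n ω} = {ω | ∑ n, W n ω ≤ τ}ᶜ := by
    ext ω; simp [not_le]
  have hWsumMeas : MeasurableSet {ω | ∑ n, W n ω ≤ τ} := by
    apply measurableSet_le _ measurable_const
    exact Finset.measurable_sum _ (fun n _ => hW n)
  rw [hcompl, prob_compl_eq_one_sub hWsumMeas,
    ENNReal.toReal_sub_of_le prob_le_one ENNReal.one_ne_top, ENNReal.toReal_one]
  have : ((Measure.pi ν) {x | ∑ n, x n ≤ τ}).toReal ≤ (μ {ω | ∑ n, W n ω ≤ τ}).toReal :=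
    (ENNReal.toReal_le_toReal (measure_ne_top _ _) (measure_ne_top _ _)).mpr key
  linarith
end

section
/- With d^j given by the FIFO recursion d^j = max(a^j, d^{j−1}) + ℓ^j/C^j, the delay D^j = d^j − a^j satisfies D^j ≤ sup_{0 ≤ s ≤ a^j} [ ∑_n A_n(s, a^j+)/C_n − (a^j − s) ] + ∑_n A_n(a^j, a^j+)/C_n, where A_n(s,t) is the cumulative class-n traffic in [s,t) and class-n customers are served at rate C_n. (Discrete-time version: the delay is bounded by the virtual waiting time at the arrival instant plus the total normalized service time of concurrent arrivals.) -/
open Finset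

/-- Discrete-time multiclass FIFO: with the departure recursion
d^j = max(a^j, d^{j−1}) + ℓ^j/C_{cls j}, the delay of customer j is bounded by the
virtual waiting time at its (integer) arrival instant a^j plus the total normalized
service time of the arrivals at time a^j:
D^j ≤ max_{0 ≤ s ≤ a^j} [∑_n A_n(s, a^j)/C_n − (a^j − s)] + ∑_n A_n(a^j, a^j+1)/C_n,
where A_n(s,t) is the cumulative class-n traffic arriving in [s,t). -/
theorem multiclass_fifo_delay_le_virtual_waiting
    (N : ℕ) (C : Fin N → ℝ) (hC : ∀ n, 0 < C n)
    (J : ℕ) (a : ℕ → ℕ) (cls : ℕ → Fin N) (l : ℕ → ℝ) (d : ℕ → ℝ)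
    (hl : ∀ k, 0 < l k) (hamono : ∀ k k', k ≤ k' → a k ≤ a k')
    (hd0 : d 0 = 0)
    (hrec : ∀ k, 1 ≤ k → d k = max (a k : ℝ) (d (k - 1)) + l k / C (cls k))
    (A : Fin N → ℕ → ℕ → ℝ)
    (hA : ∀ n s t, A n s t =
      ∑ k ∈ Finset.Icc 1 J, if cls k = n ∧ s ≤ a k ∧ a k < t then l k else 0) :
    ∀ j ∈ Finset.Icc 1 J,
      d j - (a j : ℝ) ≤
        (Finset.range (a j + 1)).sup' (Finset.nonempty_range_iff.mpr (Nat.succ_ne_zero _))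
          (fun s => ∑ n, A n s (a j) / C n - ((a j : ℝ) - (s : ℝ)))
        + ∑ n, A n (a j) (a j + 1) / C n := by
  -- rewrite ∑ n, A n s t / C n as a single sum over customers
  have hsum : ∀ s t : ℕ, ∑ n, A n s t / C n =
      ∑ k ∈ Finset.Icc 1 J, if s ≤ a k ∧ a k < t then l k / C (cls k) else 0 := by
    intro s t
    simp only [hA, Finset.sum_div]
    rw [Finset.sum_comm]
    refine Finset.sum_congr rfl fun k _ => ?_
    by_cases hP : s ≤ a k ∧ a k < t
    · simp only [hP, and_true]
      have h1 : ∀ n : Fin N, (if cls k = n then l k else 0) / C n =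
          if cls k = n then l k / C (cls k) else 0 := by
        intro n
        split
        · next h => rw [h]
        · simp
      simp only [h1]
      simp
    · simp [hP]
  -- busy period decomposition
  have key : ∀ j, 1 ≤ j → ∃ m, 1 ≤ m ∧ m ≤ j ∧
      d j = (a m : ℝ) + ∑ i ∈ Finset.Icc m j, l i / C (cls i) := by
    intro j hj
    induction j with
    | zero => omega
    | succ j ih =>
      by_cases hcase : d j ≤ (a (j+1) : ℝ)
      · refine ⟨j+1, by omega, le_refl _, ?_⟩
        rw [hrec (j+1) (by omega)]
        simp [max_eq_left hcase, Finset.Icc_self]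
      · have hj1 : 1 ≤ j := by
          by_contra h
          have hj0 : j = 0 := by omega
          rw [hj0, hd0] at hcase
          exact hcase (Nat.cast_nonneg _)
        obtain ⟨m, hm1, hmj, hdj⟩ := ih hj1
        refine ⟨m, hm1, by omega, ?_⟩
        rw [hrec (j+1) (by omega)]
        simp only [Nat.add_sub_cancel]
        rw [max_eq_right (le_of_not_ge hcase), hdj,
          Finset.sum_Icc_succ_top (by omega : m ≤ j + 1)]
        ring
  intro j hj
  obtain ⟨hj1, hjJ⟩ := Finset.mem_Icc.mp hj
  obtain ⟨m, hm1, hmj, hdj⟩ := key j hj1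
  have ham : a m ≤ a j := hamono m j hmj
  -- the key inequality on workloads
  have hwork : ∑ i ∈ Finset.Icc m j, l i / C (cls i) ≤
      ∑ n, A n (a m) (a j) / C n + ∑ n, A n (a j) (a j + 1) / C n := by
    rw [hsum, hsum, ← Finset.sum_add_distrib]
    have hsubset : Finset.Icc m j ⊆ Finset.Icc 1 J := by
      intro x hx
      rw [Finset.mem_Icc] at hx ⊢
      omega
    have heq : ∀ k ∈ Finset.Icc m j,
        l k / C (cls k) =
        (if a m ≤ a k ∧ a k < a j then l k / C (cls k) else 0) +
        (if a j ≤ a k ∧ a k < a j + 1 then l k / C (cls k) else 0) := by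
      intro k hk
      rw [Finset.mem_Icc] at hk
      have h1 : a m ≤ a k := hamono m k hk.1
      have h2 : a k ≤ a j := hamono k j hk.2
      by_cases hlt : a k < a j
      · rw [if_pos ⟨h1, hlt⟩, if_neg (by omega), add_zero]
      · rw [if_neg (by omega), if_pos ⟨by omega, by omega⟩, zero_add]
    rw [Finset.sum_congr rfl heq]
    refine Finset.sum_le_sum_of_subset_of_nonneg hsubset fun k _ _ => ?_
    have hpos : 0 ≤ l k / C (cls k) := le_of_lt (div_pos (hl k) (hC (cls k)))
    positivity
  -- conclude
  have hmem : a m ∈ Finset.range (a j + 1) := Finset.mem_range.mpr (by omega)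
  have hsup := Finset.le_sup' (f := fun s => ∑ n, A n s (a j) / C n - ((a j : ℝ) - (s : ℝ)))
    hmem
  have hcast : (a m : ℝ) ≤ (a j : ℝ) := Nat.cast_le.mpr ham
  rw [hdj]
  have := hsup
  linarith
end
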